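/- For each integer d ≥ 2, there exists a reduced submonoid M of the additive group ℤ^d such that the subgroup of ℤ^d generated by M has rank d (equivalently, M contains d ℤ-linearly independent elements), M is atomic, and M does not satisfy the ACCP. -/

import Mathlib

/-- A subset `S` of an abelian group is a submonoid if it contains `0`
and is closed under addition. -/
def IsSubmonoidSet {G : Type*} [AddCommGroup G] (S : Set G) : Prop :=
  (0 : G) ∈ S ∧ ∀ a ∈ S, ∀ b ∈ S, a + b ∈ S

/-- `a` is an atom of the (sub)monoid `S`: it belongs to `S`, is not invertible in `S`,
and whenever `a = b + c` with `b, c ∈ S`, one of `b`, `c` is invertible in `S`. -/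
def IsAtomIn {G : Type*} [AddCommGroup G] (S : Set G) (a : G) : Prop :=
  a ∈ S ∧ -a ∉ S ∧ ∀ b ∈ S, ∀ c ∈ S, a = b + c → (-b ∈ S ∨ -c ∈ S)

/-- `S` is atomic: every non-invertible element of `S` is a finite sum of atoms of `S`. -/
def IsAtomicSet {G : Type*} [AddCommGroup G] (S : Set G) : Prop :=
  ∀ a ∈ S, -a ∉ S → ∃ l : Multiset G, (∀ x ∈ l, IsAtomIn S x) ∧ l.sum = a

/-- The principal ideal `b + S` of the (sub)monoid `S`. -/
def setIdeal {G : Type*} [AddCommGroup G] (S : Set G) (b : G) : Set G :=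
  {x | ∃ m ∈ S, x = b + m}

/-- `S` satisfies the ACCP: every ascending chain of principal ideals of `S` stabilizes. -/
def SatisfiesACCPSet {G : Type*} [AddCommGroup G] (S : Set G) : Prop :=
  ∀ b : ℕ → G, (∀ n, b n ∈ S) →
    (∀ n, setIdeal S (b n) ⊆ setIdeal S (b (n + 1))) →
    ∃ N, ∀ n, N ≤ n → setIdeal S (b n) = setIdeal S (b N)


open Zsqrtd

namespace S8

/-- ω = √3 - 1 as an element of ℤ√3. -/
def om : ℤ√3 := ⟨-1, 1⟩

noncomputable def psi : ℤ√3 →+* ℝ := Zsqrtd.toReal (by norm_num)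

noncomputable def al : ℝ := Real.sqrt 3 - 1

lemma psi_apply (z : ℤ√3) : psi z = z.re + z.im * Real.sqrt 3 := by
  simp [psi]

lemma psi_om : psi om = al := by
  simp [psi_apply, om, al]; ring

lemma sqrt3_gt_one : (1:ℝ) < Real.sqrt 3 := by
  have := Real.sqrt_lt_sqrt (by norm_num : (0:ℝ) ≤ 1) (by norm_num : (1:ℝ) < 3)
  simpa using this

lemma sqrt3_lt_two : Real.sqrt 3 < 2 := by
  nlinarith [Real.sq_sqrt (by norm_num : (0:ℝ) ≤ 3), Real.sqrt_nonneg 3]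

lemma al_pos : 0 < al := by simp [al]; linarith [sqrt3_gt_one]

lemma al_lt_one : al < 1 := by simp [al]; linarith [sqrt3_lt_two]

lemma psi_inj : Function.Injective psi := by
  refine Zsqrtd.toReal_injective _ ?_
  intro n h
  rcases (by omega : n ≤ -2 ∨ (-1 ≤ n ∧ n ≤ 1) ∨ 2 ≤ n) with h1 | h1 | h1 <;> nlinarith

lemma psi_pow (i : ℕ) : psi (om ^ i) = al ^ i := by
  rw [map_pow, psi_om]

/-- the sum of ω-powers indexed by a multiset. -/
def Nsum (l : Multiset ℕ) : ℤ√3 := (l.map fun i => om ^ i).sum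

lemma Nsum_zero : Nsum 0 = 0 := rfl

lemma Nsum_cons (a : ℕ) (t : Multiset ℕ) : Nsum (a ::ₘ t) = om ^ a + Nsum t := by
  simp [Nsum]

lemma Nsum_add (l1 l2 : Multiset ℕ) : Nsum (l1 + l2) = Nsum l1 + Nsum l2 := by
  simp [Nsum]

lemma Nsum_singleton (k : ℕ) : Nsum {k} = om ^ k := by simp [Nsum]

lemma psi_Nsum_nonneg (l : Multiset ℕ) : 0 ≤ psi (Nsum l) := by
  induction l using Multiset.induction_on with
  | empty => simp [Nsum_zero]
  | cons a t ih =>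
      rw [Nsum_cons, map_add, psi_pow]
      have := pow_pos al_pos a
      linarith

lemma psi_Nsum_pos (l : Multiset ℕ) (h : l ≠ 0) : 0 < psi (Nsum l) := by
  obtain ⟨a, ha⟩ := Multiset.exists_mem_of_ne_zero h
  obtain ⟨t, rfl⟩ := Multiset.exists_cons_of_mem ha
  rw [Nsum_cons, map_add, psi_pow]
  have h1 := pow_pos al_pos a
  have h2 := psi_Nsum_nonneg t
  linarith

lemma Nsum_eq_zero (l : Multiset ℕ) (h : Nsum l = 0) : l = 0 := by
  by_contra hne
  have := psi_Nsum_pos l hne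
  rw [h, map_zero] at this
  exact lt_irrefl _ this

/-- 2 = 2ω + ω² in ℤ√3. -/
lemma key_rel : (2 : ℤ√3) = 2 * om + om ^ 2 := by
  have : (2 : ℤ√3) = ⟨2, 0⟩ := by
    have : ((2:ℤ) : ℤ√3) = ⟨2, 0⟩ := rfl
    simpa using this
  rw [this, pow_two]
  simp [om, Zsqrtd.ext_iff, Zsqrtd.re_mul, Zsqrtd.im_mul]

lemma om_sq : om ^ 2 = 2 * (⟨2, -1⟩ : ℤ√3) := by
  rw [pow_two]
  simp [om, Zsqrtd.ext_iff, Zsqrtd.re_mul, Zsqrtd.im_mul]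

lemma om_pow_even (i : ℕ) (hi : 2 ≤ i) : ∃ z : ℤ√3, om ^ i = 2 * z := by
  refine ⟨(⟨2, -1⟩ : ℤ√3) * om ^ (i - 2), ?_⟩
  conv_lhs => rw [(by omega : i = 2 + (i - 2))]
  rw [pow_add, om_sq, mul_assoc]

lemma Nsum_even (m : Multiset ℕ) (hm : ∀ i ∈ m, 2 ≤ i) : ∃ z : ℤ√3, Nsum m = 2 * z := by
  induction m using Multiset.induction_on with
  | empty => exact ⟨0, by simp [Nsum_zero]⟩
  | cons a t ih =>
      obtain ⟨zt, hzt⟩ := ih (fun i hi => hm i (Multiset.mem_cons_of_mem hi))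
      obtain ⟨za, hza⟩ := om_pow_even a (hm a (Multiset.mem_cons_self a t))
      exact ⟨za + zt, by rw [Nsum_cons, hza, hzt, mul_add]⟩


/-- Any multiset representation of 1 as a sum of ω-powers is the singleton {0}. -/
lemma rep_one (l : Multiset ℕ) (h : Nsum l = 1) : l = ({0} : Multiset ℕ) := by
  -- split off the zeros
  have hsplit := Multiset.filter_add_not (fun i => i = 0) l
  set r := Multiset.filter (fun i => ¬ i = 0) l with hr
  have hzeros : Multiset.filter (fun i => i = 0) l = Multiset.replicate (l.count 0) 0 := by
    simpa using Multiset.filter_eq' l 0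
  set t0 := l.count 0 with ht0
  -- Nsum of the zero part
  have hNz : Nsum (Multiset.replicate t0 0) = (t0 : ℤ√3) := by
    simp [Nsum, Multiset.map_replicate, Multiset.sum_replicate]
  -- split r into ones and ≥ 2
  have hsplit2 := Multiset.filter_add_not (fun i => i = 1) r
  set r2 := Multiset.filter (fun i => ¬ i = 1) r with hr2
  have hones : Multiset.filter (fun i => i = 1) r = Multiset.replicate (r.count 1) 1 := by
    simpa using Multiset.filter_eq' r 1
  set t1 := r.count 1 with ht1
  have hNo : Nsum (Multiset.replicate t1 1) = (t1 : ℤ√3) * om := by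
    simp [Nsum, Multiset.map_replicate, Multiset.sum_replicate, nsmul_eq_mul, pow_one]
  have hr2ge : ∀ i ∈ r2, 2 ≤ i := by
    intro i hi
    have h1 := Multiset.of_mem_filter hi
    have h2 := Multiset.of_mem_filter (Multiset.mem_of_mem_filter hi : i ∈ r)
    omega
  obtain ⟨z, hz⟩ := Nsum_even r2 hr2ge
  -- total equation
  have heq : (t0 : ℤ√3) + ((t1 : ℤ√3) * om + 2 * z) = 1 := by
    calc (t0 : ℤ√3) + ((t1 : ℤ√3) * om + 2 * z)
        = Nsum (Multiset.replicate t0 0) + (Nsum (Multiset.replicate t1 1) + Nsum r2) := by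
          rw [hNz, hNo, hz]
      _ = Nsum (Multiset.replicate t0 0) + Nsum r := by
          rw [← Nsum_add, ← hones, hsplit2]
      _ = Nsum l := by rw [← Nsum_add, ← hzeros, hsplit]
      _ = 1 := h
  -- components
  have hre : (t0 : ℤ) + ((t1 : ℤ) * (-1) + 2 * z.re) = 1 := by
    have := congrArg Zsqrtd.re heq
    simpa [om, Zsqrtd.re_mul, Zsqrtd.im_mul] using this
  have him : (t1 : ℤ) * 1 + 2 * z.im = 0 := by
    have := congrArg Zsqrtd.im heq
    simpa [om, Zsqrtd.re_mul, Zsqrtd.im_mul] using this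
  -- t0 is odd, in particular t0 ≥ 1
  have ht0odd : t0 % 2 = 1 := by omega
  -- on the other hand psi gives t0 ≤ 1
  have hpsi : psi (Nsum l) = 1 := by rw [h, map_one]
  have hdecomp : Nsum l = Nsum (Multiset.replicate t0 0) + Nsum r := by
    rw [← Nsum_add, ← hzeros, hsplit]
  have hpsir : 0 ≤ psi (Nsum r) := psi_Nsum_nonneg r
  have hpsit0 : psi (Nsum (Multiset.replicate t0 0)) = (t0 : ℝ) := by
    rw [hNz]; simp
  have ht0le : (t0 : ℝ) ≤ 1 := by
    rw [hdecomp, map_add, hpsit0] at hpsi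
    linarith
  have ht0eq : t0 = 1 := by
    have : (t0 : ℝ) ≤ 1 := ht0le
    have h2 : t0 ≤ 1 := by exact_mod_cast this
    omega
  -- then r must be empty
  have hrzero : r = 0 := by
    have : psi (Nsum r) = 0 := by
      rw [hdecomp, map_add, hpsit0, ht0eq] at hpsi
      push_cast at hpsi
      linarith
    by_contra hne
    exact absurd this (ne_of_gt (psi_Nsum_pos r hne))
  rw [← hsplit, hzeros, hrzero, ht0eq]
  rfl

/-- ★★ : the only representation of ω^k is the singleton {k}. -/
lemma rep_pow (l : Multiset ℕ) (k : ℕ) (h : Nsum l = om ^ k) : l = ({k} : Multiset ℕ) := by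
  -- every element of l is ≥ k
  have hge : ∀ i ∈ l, k ≤ i := by
    intro i hi
    by_contra hlt
    obtain ⟨t, rfl⟩ := Multiset.exists_cons_of_mem hi
    rw [Nsum_cons] at h
    have := congrArg psi h
    rw [map_add, psi_pow, psi_pow] at this
    have h1 : al ^ k < al ^ i := pow_lt_pow_right_of_lt_one₀ al_pos al_lt_one (by omega)
    have h2 := psi_Nsum_nonneg t
    linarith
  -- factor out ω^k
  have hfac : Nsum l = om ^ k * Nsum (l.map (fun i => i - k)) := by
    calc Nsum l = (l.map fun i => om ^ k * om ^ (i - k)).sum := by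
          rw [Nsum]
          congr 1
          refine Multiset.map_congr rfl (fun i hi => ?_)
          rw [← pow_add]
          congr 1
          have := hge i hi
          omega
      _ = om ^ k * (l.map fun i => om ^ (i - k)).sum :=
          Multiset.sum_map_mul_left (s := l) (a := om ^ k) (f := fun i => om ^ (i - k))
      _ = om ^ k * Nsum (l.map (fun i => i - k)) := by
          rw [Nsum, Multiset.map_map]
          rfl
  have hS : Nsum (l.map (fun i => i - k)) = 1 := by
    apply psi_inj
    have := congrArg psi h
    rw [hfac, map_mul, psi_pow] at this
    have hk : al ^ k ≠ 0 := ne_of_gt (pow_pos al_pos k)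
    rw [map_one]
    calc psi (Nsum (Multiset.map (fun i => i - k) l))
        = (al ^ k * psi (Nsum (Multiset.map (fun i => i - k) l))) / al ^ k := by
          field_simp
      _ = (al ^ k) / al ^ k := by rw [this]
      _ = 1 := by field_simp
  have hmap := rep_one _ hS
  -- conclude l = {k}
  have hcard : Multiset.card l = 1 := by
    have := congrArg Multiset.card hmap
    simpa using this
  obtain ⟨i, rfl⟩ := Multiset.card_eq_one.mp hcard
  have : i - k = 0 := by
    have : Multiset.map (fun i => i - k) {i} = ({i - k} : Multiset ℕ) := by simp
    rw [this] at hmap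
    simpa using hmap
  have hik := hge i (by simp)
  simp only [Multiset.singleton_inj]
  omega


section D

variable (d : ℕ) (hd : 2 ≤ d)

def i0 : Fin d := ⟨0, by omega⟩
def i1 : Fin d := ⟨1, by omega⟩

/-- embedding of ℤ√3 into the first two coordinates of ℤ^d. -/
def vec (z : ℤ√3) : Fin d → ℤ := fun j => if j.val = 0 then z.re else if j.val = 1 then z.im else 0

/-- projection onto the first two coordinates, as an element of ℤ√3. -/
def proj (v : Fin d → ℤ) : ℤ√3 := ⟨v (i0 d hd), v (i1 d hd)⟩

/-- The monoid: first two coordinates give an element of the ω-monoid, the rest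
are nonnegative. -/
def MM : Set (Fin d → ℤ) :=
  {v | (∃ l : Multiset ℕ, Nsum l = proj d hd v) ∧ ∀ j : Fin d, 2 ≤ j.val → 0 ≤ v j}

lemma proj_add (v w : Fin d → ℤ) :
    proj d hd (v + w) = proj d hd v + proj d hd w := by
  simp [proj, Zsqrtd.ext_iff]

lemma proj_neg (v : Fin d → ℤ) : proj d hd (-v) = -proj d hd v := by
  simp [proj, Zsqrtd.ext_iff]

lemma proj_zero : proj d hd 0 = 0 := by
  simp [proj, Zsqrtd.ext_iff]

lemma vec_add (z w : ℤ√3) : vec d (z + w) = vec d z + vec d w := by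
  funext j
  simp only [vec, Pi.add_apply]
  split_ifs <;> simp

lemma vec_i0 (z : ℤ√3) : vec d z (i0 d hd) = z.re := by simp [vec, i0]

lemma vec_i1 (z : ℤ√3) : vec d z (i1 d hd) = z.im := by simp [vec, i1]

lemma proj_vec (z : ℤ√3) : proj d hd (vec d z) = z := by
  simp [proj, vec_i0, vec_i1, Zsqrtd.ext_iff]

lemma vec_tail (z : ℤ√3) (j : Fin d) (hj : 2 ≤ j.val) : vec d z j = 0 := by
  simp only [vec]
  rw [if_neg (by omega), if_neg (by omega)]

lemma vec_mem (z : ℤ√3) (hz : ∃ l : Multiset ℕ, Nsum l = z) : vec d z ∈ MM d hd := by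
  refine ⟨?_, ?_⟩
  · rw [proj_vec]; exact hz
  · intro j hj; rw [vec_tail d z j hj]

lemma MM_zero : (0 : Fin d → ℤ) ∈ MM d hd :=
  ⟨⟨0, by rw [Nsum_zero, proj_zero]⟩, fun j _ => le_refl 0⟩

lemma MM_add {v w : Fin d → ℤ} (hv : v ∈ MM d hd) (hw : w ∈ MM d hd) :
    v + w ∈ MM d hd := by
  obtain ⟨⟨lv, hlv⟩, hv2⟩ := hv
  obtain ⟨⟨lw, hlw⟩, hw2⟩ := hw
  refine ⟨⟨lv + lw, ?_⟩, ?_⟩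
  · rw [Nsum_add, hlv, hlw, proj_add]
  · intro j hj
    have := hv2 j hj
    have := hw2 j hj
    simp only [Pi.add_apply]
    omega

/-- The real functional: positive combination of coordinates. -/
noncomputable def Phi (v : Fin d → ℤ) : ℝ :=
  psi (proj d hd v) + ∑ j : Fin d, (if 2 ≤ j.val then (v j : ℝ) else 0)

lemma Phi_add (v w : Fin d → ℤ) : Phi d hd (v + w) = Phi d hd v + Phi d hd w := by
  simp only [Phi, proj_add, map_add, Pi.add_apply]
  have : ∑ j : Fin d, (if 2 ≤ j.val then ((v j + w j : ℤ) : ℝ) else 0)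
      = ∑ j : Fin d, ((if 2 ≤ j.val then (v j : ℝ) else 0) + (if 2 ≤ j.val then (w j : ℝ) else 0)) := by
    refine Finset.sum_congr rfl (fun j _ => ?_)
    split_ifs <;> push_cast <;> ring
  rw [this, Finset.sum_add_distrib]
  ring

lemma Phi_nonneg {v : Fin d → ℤ} (hv : v ∈ MM d hd) : 0 ≤ Phi d hd v := by
  obtain ⟨⟨l, hl⟩, hv2⟩ := hv
  have h1 : 0 ≤ psi (proj d hd v) := by rw [← hl]; exact psi_Nsum_nonneg l
  have h2 : 0 ≤ ∑ j : Fin d, (if 2 ≤ j.val then (v j : ℝ) else 0) := by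
    refine Finset.sum_nonneg (fun j _ => ?_)
    split_ifs with h
    · exact_mod_cast hv2 j h
    · exact le_refl 0
  simp only [Phi]
  linarith

lemma Phi_vec (z : ℤ√3) : Phi d hd (vec d z) = psi z := by
  simp only [Phi, proj_vec]
  rw [Finset.sum_eq_zero, add_zero]
  intro j _
  split_ifs with h
  · rw [vec_tail d z j h]; simp
  · rfl

/-- reducedness -/
lemma MM_reduced {a : Fin d → ℤ} (ha : a ∈ MM d hd) (hna : -a ∈ MM d hd) : a = 0 := by
  obtain ⟨⟨l, hl⟩, ha2⟩ := ha
  obtain ⟨⟨l', hl'⟩, hna2⟩ := hna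
  have hps : psi (proj d hd a) = 0 := by
    have h1 : 0 ≤ psi (proj d hd a) := by rw [← hl]; exact psi_Nsum_nonneg l
    have h2 : 0 ≤ psi (proj d hd (-a)) := by rw [← hl']; exact psi_Nsum_nonneg l'
    rw [proj_neg, map_neg] at h2
    linarith
  have hlz : l = 0 := by
    by_contra hne
    have := psi_Nsum_pos l hne
    rw [hl, hps] at this
    exact lt_irrefl _ this
  have hproj : proj d hd a = 0 := by rw [← hl, hlz, Nsum_zero]
  funext j
  rcases (by omega : j.val = 0 ∨ j.val = 1 ∨ 2 ≤ j.val) with h | h | h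
  · have : j = i0 d hd := Fin.ext (by simp [i0, h])
    rw [this]
    have := congrArg Zsqrtd.re hproj
    simpa [proj] using this
  · have : j = i1 d hd := Fin.ext (by simp [i1, h])
    rw [this]
    have := congrArg Zsqrtd.im hproj
    simpa [proj] using this
  · have h1 := ha2 j h
    have h2 := hna2 j h
    simp only [Pi.neg_apply] at h2
    simp only [Pi.zero_apply]
    omega

lemma eq_zero_of_proj_tail {b : Fin d → ℤ} (hproj : proj d hd b = 0)
    (htail : ∀ j : Fin d, 2 ≤ j.val → b j = 0) : b = 0 := by
  funext j
  rcases (by omega : j.val = 0 ∨ j.val = 1 ∨ 2 ≤ j.val) with h | h | h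
  · have : j = i0 d hd := Fin.ext (by simp [i0, h])
    rw [this]
    have := congrArg Zsqrtd.re hproj
    simpa [proj] using this
  · have : j = i1 d hd := Fin.ext (by simp [i1, h])
    rw [this]
    have := congrArg Zsqrtd.im hproj
    simpa [proj] using this
  · simpa using htail j h

lemma proj_single (j0 : Fin d) (hj0 : 2 ≤ j0.val) :
    proj d hd (Pi.single j0 (1:ℤ)) = 0 := by
  have h0 : (Pi.single j0 1 : Fin d → ℤ) (i0 d hd) = 0 := by
    apply Pi.single_eq_of_ne
    intro h
    have := congrArg Fin.val h
    simp [i0] at this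
    omega
  have h1 : (Pi.single j0 1 : Fin d → ℤ) (i1 d hd) = 0 := by
    apply Pi.single_eq_of_ne
    intro h
    have := congrArg Fin.val h
    simp [i1] at this
    omega
  simp [proj, h0, h1, Zsqrtd.ext_iff]

lemma single_mem (j0 : Fin d) (hj0 : 2 ≤ j0.val) : Pi.single j0 (1:ℤ) ∈ MM d hd := by
  refine ⟨⟨0, by rw [Nsum_zero, proj_single d hd j0 hj0]⟩, ?_⟩
  intro j hj
  rw [Pi.single_apply]
  split_ifs <;> norm_num

lemma psi_proj_eq_zero {b : Fin d → ℤ} (hb : ∃ l : Multiset ℕ, Nsum l = proj d hd b)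
    (h : psi (proj d hd b) = 0) : proj d hd b = 0 := by
  obtain ⟨l, hl⟩ := hb
  have hlz : l = 0 := by
    by_contra hne
    have := psi_Nsum_pos l hne
    rw [hl, h] at this
    exact lt_irrefl _ this
  rw [← hl, hlz, Nsum_zero]

/-- the extra unit vectors are atoms. -/
lemma atom_single (j0 : Fin d) (hj0 : 2 ≤ j0.val) :
    IsAtomIn (MM d hd) (Pi.single j0 (1:ℤ)) := by
  refine ⟨single_mem d hd j0 hj0, ?_, ?_⟩
  · intro hmem
    have := hmem.2 j0 hj0
    simp at this
  · intro b hb c hc heq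
    obtain ⟨hb1, hb2⟩ := hb
    obtain ⟨hc1, hc2⟩ := hc
    -- projections vanish
    have hsum : psi (proj d hd b) + psi (proj d hd c) = 0 := by
      rw [← map_add, ← proj_add, ← heq, proj_single d hd j0 hj0, map_zero]
    have hbn : 0 ≤ psi (proj d hd b) := by
      obtain ⟨l, hl⟩ := hb1; rw [← hl]; exact psi_Nsum_nonneg l
    have hcn : 0 ≤ psi (proj d hd c) := by
      obtain ⟨l, hl⟩ := hc1; rw [← hl]; exact psi_Nsum_nonneg l
    have hbp : proj d hd b = 0 := psi_proj_eq_zero d hd hb1 (by linarith)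
    have hcp : proj d hd c = 0 := psi_proj_eq_zero d hd hc1 (by linarith)
    -- tail coordinates other than j0 vanish
    have htail : ∀ j : Fin d, 2 ≤ j.val → j ≠ j0 → b j = 0 ∧ c j = 0 := by
      intro j hj hne
      have h1 := hb2 j hj
      have h2 := hc2 j hj
      have h3 : b j + c j = 0 := by
        have := congrFun heq j
        simp only [Pi.add_apply] at this
        rw [Pi.single_apply, if_neg hne] at this
        omega
      omega
    -- at j0, one of the two is 0
    have hj0sum : b j0 + c j0 = 1 := by
      have := congrFun heq j0
      simp only [Pi.add_apply] at this
      rw [Pi.single_apply, if_pos rfl] at this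
      omega
    have hbj0 := hb2 j0 hj0
    have hcj0 := hc2 j0 hj0
    rcases (by omega : b j0 = 0 ∨ c j0 = 0) with h | h
    · left
      have : b = 0 := by
        apply eq_zero_of_proj_tail d hd hbp
        intro j hj
        by_cases hne : j = j0
        · rw [hne]; exact h
        · exact (htail j hj hne).1
      rw [this, neg_zero]
      exact MM_zero d hd
    · right
      have : c = 0 := by
        apply eq_zero_of_proj_tail d hd hcp
        intro j hj
        by_cases hne : j = j0
        · rw [hne]; exact h
        · exact (htail j hj hne).2
      rw [this, neg_zero]
      exact MM_zero d hd

/-- the ω-power vectors are atoms. -/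
lemma atom_vec (k : ℕ) : IsAtomIn (MM d hd) (vec d (om ^ k)) := by
  refine ⟨vec_mem d hd _ ⟨{k}, Nsum_singleton k⟩, ?_, ?_⟩
  · intro hmem
    obtain ⟨⟨l, hl⟩, _⟩ := hmem
    have h1 : psi (Nsum l) = -(al ^ k) := by
      rw [hl, proj_neg, proj_vec, map_neg, psi_pow]
    have h2 := psi_Nsum_nonneg l
    have h3 := pow_pos al_pos k
    linarith
  · intro b hb c hc heq
    obtain ⟨⟨lb, hlb⟩, hb2⟩ := hb
    obtain ⟨⟨lc, hlc⟩, hc2⟩ := hc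
    have hps : Nsum (lb + lc) = om ^ k := by
      rw [Nsum_add, hlb, hlc, ← proj_add, ← heq, proj_vec]
    have hsing := rep_pow _ k hps
    have hcard : Multiset.card lb + Multiset.card lc = 1 := by
      have := congrArg Multiset.card hsing
      simpa using this
    -- tails of b and c vanish
    have htail : ∀ j : Fin d, 2 ≤ j.val → b j = 0 ∧ c j = 0 := by
      intro j hj
      have h1 := hb2 j hj
      have h2 := hc2 j hj
      have h3 : b j + c j = 0 := by
        have := congrFun heq j
        simp only [Pi.add_apply] at this
        rw [vec_tail d _ j hj] at this
        omega
      omega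
    rcases (by omega : Multiset.card lb = 0 ∨ Multiset.card lc = 0) with h | h
    · left
      have hlb0 : lb = 0 := Multiset.card_eq_zero.mp h
      have : b = 0 := by
        apply eq_zero_of_proj_tail d hd
        · rw [← hlb, hlb0, Nsum_zero]
        · exact fun j hj => (htail j hj).1
      rw [this, neg_zero]
      exact MM_zero d hd
    · right
      have hlc0 : lc = 0 := Multiset.card_eq_zero.mp h
      have : c = 0 := by
        apply eq_zero_of_proj_tail d hd
        · rw [← hlc, hlc0, Nsum_zero]
        · exact fun j hj => (htail j hj).2
      rw [this, neg_zero]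
      exact MM_zero d hd

lemma vec_zero : vec d 0 = 0 := by
  funext j
  simp only [vec, Pi.zero_apply, Zsqrtd.re_zero, Zsqrtd.im_zero]
  split_ifs <;> rfl

lemma vec_Nsum (l : Multiset ℕ) :
    (l.map fun i => vec d (om ^ i)).sum = vec d (Nsum l) := by
  induction l using Multiset.induction_on with
  | empty => simp [Nsum_zero, vec_zero]
  | cons a t ih => simp only [Multiset.map_cons, Multiset.sum_cons, ih, Nsum_cons, vec_add]

lemma multiset_sum_sum {β : Type*} [AddCommMonoid β] (s : Finset (Fin d))
    (f : Fin d → Multiset β) : (∑ j ∈ s, f j).sum = ∑ j ∈ s, (f j).sum :=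
  map_sum Multiset.sumAddMonoidHom f s

/-- atomicity -/
lemma MM_atomic : IsAtomicSet (MM d hd) := by
  intro a ha _
  obtain ⟨⟨lN, hlN⟩, ha2⟩ := ha
  classical
  refine ⟨(lN.map fun i => vec d (om ^ i)) +
      ∑ j : Fin d, (if 2 ≤ j.val then Multiset.replicate (a j).toNat (Pi.single j (1:ℤ)) else 0),
      ?_, ?_⟩
  · intro x hx
    rcases Multiset.mem_add.mp hx with hx | hx
    · obtain ⟨i, _, rfl⟩ := Multiset.mem_map.mp hx
      exact atom_vec d hd i
    · rw [Multiset.mem_sum] at hx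
      obtain ⟨j, _, hj⟩ := hx
      by_cases h2 : 2 ≤ j.val
      · rw [if_pos h2] at hj
        have := Multiset.eq_of_mem_replicate hj
        rw [this]
        exact atom_single d hd j h2
      · rw [if_neg h2] at hj
        simp at hj
  · rw [Multiset.sum_add, vec_Nsum, hlN, multiset_sum_sum]
    funext jj
    simp only [Pi.add_apply]
    have hsum : (∑ j : Fin d, (if 2 ≤ j.val then Multiset.replicate (a j).toNat
        (Pi.single j (1:ℤ)) else 0).sum) jj
        = ∑ j : Fin d, ((if 2 ≤ j.val then Multiset.replicate (a j).toNat
        (Pi.single j (1:ℤ)) else 0).sum) jj := by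
      rw [Finset.sum_apply]
    rw [hsum]
    rcases (by omega : jj.val = 0 ∨ jj.val = 1 ∨ 2 ≤ jj.val) with h | h | h
    · have hv : vec d (proj d hd a) jj = a jj := by
        have : jj = i0 d hd := Fin.ext (by simp [i0, h])
        rw [this, vec_i0]
        rfl
      rw [hv, Finset.sum_eq_zero, add_zero]
      intro j _
      by_cases h2 : 2 ≤ j.val
      · rw [if_pos h2, Multiset.sum_replicate, Pi.smul_apply, Pi.single_apply,
          if_neg (by intro hh; rw [hh] at h; omega)]
        simp
      · rw [if_neg h2]
        rfl
    · have hv : vec d (proj d hd a) jj = a jj := by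
        have : jj = i1 d hd := Fin.ext (by simp [i1, h])
        rw [this, vec_i1]
        rfl
      rw [hv, Finset.sum_eq_zero, add_zero]
      intro j _
      by_cases h2 : 2 ≤ j.val
      · rw [if_pos h2, Multiset.sum_replicate, Pi.smul_apply, Pi.single_apply,
          if_neg (by intro hh; rw [hh] at h; omega)]
        simp
      · rw [if_neg h2]
        rfl
    · rw [vec_tail d _ jj h, zero_add]
      rw [Finset.sum_eq_single jj]
      · rw [if_pos h, Multiset.sum_replicate, Pi.smul_apply, Pi.single_eq_same]
        have := ha2 jj h
        simp only [nsmul_eq_mul, mul_one]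
        omega
      · intro j _ hne
        by_cases h2 : 2 ≤ j.val
        · rw [if_pos h2, Multiset.sum_replicate, Pi.smul_apply, Pi.single_apply,
            if_neg (fun hh => hne hh.symm)]
          simp
        · rw [if_neg h2]
          rfl
      · intro hmem
        exact absurd (Finset.mem_univ jj) hmem

lemma ne_i0_i1_val {i : Fin d} (h0 : i ≠ i0 d hd) (h1 : i ≠ i1 d hd) : 2 ≤ i.val := by
  by_contra h
  rcases (by omega : i.val = 0 ∨ i.val = 1) with hv | hv
  · exact h0 (Fin.ext (by simp [i0, hv]))
  · exact h1 (Fin.ext (by simp [i1, hv]))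

/-- the basis family inside MM -/
noncomputable def ff : Fin d → (Fin d → ℤ) := fun i =>
  if i = i0 d hd then vec d 1 else if i = i1 d hd then vec d om else Pi.single i 1

lemma ff_mem (i : Fin d) : ff d hd i ∈ MM d hd := by
  by_cases h0 : i = i0 d hd
  · rw [ff, if_pos h0]
    exact vec_mem d hd 1 ⟨{0}, by rw [Nsum_singleton, pow_zero]⟩
  by_cases h1 : i = i1 d hd
  · rw [ff, if_neg h0, if_pos h1]
    exact vec_mem d hd om ⟨{1}, by rw [Nsum_singleton, pow_one]⟩
  · rw [ff, if_neg h0, if_neg h1]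
    exact single_mem d hd i (ne_i0_i1_val d hd h0 h1)

lemma ff_li : LinearIndependent ℤ (ff d hd) := by
  classical
  rw [Fintype.linearIndependent_iff]
  intro g hg
  have hco : ∀ jj : Fin d, ∑ i : Fin d, g i * (ff d hd i jj) = 0 := by
    intro jj
    have := congrFun hg jj
    simpa [Finset.sum_apply] using this
  have hval : ∀ (i jj : Fin d), 2 ≤ jj.val → i ≠ jj → ff d hd i jj = 0 := by
    intro i jj hjj hne
    by_cases h0 : i = i0 d hd
    · rw [ff, if_pos h0, vec_tail d _ jj hjj]
    by_cases h1 : i = i1 d hd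
    · rw [ff, if_neg h0, if_pos h1, vec_tail d _ jj hjj]
    · rw [ff, if_neg h0, if_neg h1]
      exact Pi.single_eq_of_ne (fun hh => hne hh.symm) 1
  have hi0ne : i0 d hd ≠ i1 d hd := by
    intro hh
    have := congrArg Fin.val hh
    simp [i0, i1] at this
  -- g (i1) = 0
  have hg1 : g (i1 d hd) = 0 := by
    have := hco (i1 d hd)
    rw [Finset.sum_eq_single (i1 d hd)] at this
    · rw [ff, if_neg (Ne.symm hi0ne), if_pos rfl, vec_i1] at this
      simpa [om] using this
    · intro i _ hne
      by_cases h0 : i = i0 d hd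
      · rw [ff, if_pos h0, vec_i1]
        simp
      · rw [ff, if_neg h0, if_neg hne, Pi.single_eq_of_ne (Ne.symm hne) 1, mul_zero]
    · intro h; exact absurd (Finset.mem_univ _) h
  -- g (i0) = 0
  have hg0 : g (i0 d hd) = 0 := by
    have := hco (i0 d hd)
    rw [Finset.sum_eq_single (i0 d hd)] at this
    · rw [ff, if_pos rfl, vec_i0] at this
      simpa using this
    · intro i _ hne
      by_cases h1 : i = i1 d hd
      · rw [ff, if_neg hne, if_pos h1, vec_i0, h1, hg1, zero_mul]
      · rw [ff, if_neg hne, if_neg h1, Pi.single_eq_of_ne (Ne.symm hne) 1, mul_zero]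
    · intro h; exact absurd (Finset.mem_univ _) h
  intro i
  by_cases h0 : i = i0 d hd
  · rw [h0]; exact hg0
  by_cases h1 : i = i1 d hd
  · rw [h1]; exact hg1
  · have hiv := ne_i0_i1_val d hd h0 h1
    have := hco i
    rw [Finset.sum_eq_single i] at this
    · rw [ff, if_neg h0, if_neg h1, Pi.single_eq_same] at this
      simpa using this
    · intro i2 _ hne
      rw [hval i2 i hiv hne, mul_zero]
    · intro h; exact absurd (Finset.mem_univ _) h

/-- the non-stabilizing chain -/
noncomputable def bb (n : ℕ) : Fin d → ℤ := vec d (2 * om ^ n)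

lemma bb_mem (n : ℕ) : bb d n ∈ MM d hd :=
  vec_mem d hd _ ⟨n ::ₘ {n}, by rw [Nsum_cons, Nsum_singleton, two_mul]⟩

lemma bb_split (n : ℕ) : bb d n = bb d (n + 1) + vec d (om ^ (n + 2)) := by
  have h : (2 : ℤ√3) * om ^ n = 2 * om ^ (n + 1) + om ^ (n + 2) := by
    calc (2 : ℤ√3) * om ^ n = (2 * om + om ^ 2) * om ^ n := by rw [← key_rel]
      _ = 2 * om ^ (n + 1) + om ^ (n + 2) := by ring
  rw [bb, bb, ← vec_add, h]

lemma Phi_bb (n : ℕ) : Phi d hd (bb d n) = 2 * al ^ n := by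
  rw [bb, Phi_vec, map_mul, map_pow, psi_om, map_ofNat]

lemma not_ACCP : ¬ SatisfiesACCPSet (MM d hd) := by
  intro hACCP
  obtain ⟨N, hN⟩ := hACCP (bb d) (fun n => bb_mem d hd n) (fun n => by
    intro x hx
    obtain ⟨m, hm, hx⟩ := hx
    refine ⟨vec d (om ^ (n + 2)) + m,
      MM_add d hd (vec_mem d hd _ ⟨{n + 2}, Nsum_singleton _⟩) hm, ?_⟩
    rw [hx, bb_split d n]
    abel)
  have hmem : bb d (N + 1) ∈ setIdeal (MM d hd) (bb d (N + 1)) :=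
    ⟨0, MM_zero d hd, by rw [add_zero]⟩
  rw [hN (N + 1) (Nat.le_succ N)] at hmem
  obtain ⟨m, hm, hmeq⟩ := hmem
  have hPhi : Phi d hd (bb d (N + 1)) = Phi d hd (bb d N) + Phi d hd m := by
    rw [hmeq, Phi_add]
  rw [Phi_bb, Phi_bb] at hPhi
  have h1 : al ^ (N + 1) < al ^ N :=
    pow_lt_pow_right_of_lt_one₀ al_pos al_lt_one (Nat.lt_succ_self N)
  have h2 := Phi_nonneg d hd hm
  linarith

end D

end S8


/-- For each `d ≥ 2` there is a reduced submonoid `M` of `ℤ^d` of full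
rank `d` (i.e. `M` contains `d` linearly independent elements over `ℤ`) that is atomic but
does not satisfy the ACCP. -/
theorem exists_full_rank_atomic_lattice_monoid_not_ACCP (d : ℕ) (hd : 2 ≤ d) :
    ∃ M : Set (Fin d → ℤ), IsSubmonoidSet M ∧
      (∀ a ∈ M, -a ∈ M → a = 0) ∧
      (∃ f : Fin d → (Fin d → ℤ), (∀ i, f i ∈ M) ∧ LinearIndependent ℤ f) ∧
      IsAtomicSet M ∧ ¬ SatisfiesACCPSet M := by
  refine ⟨S8.MM d hd, ⟨S8.MM_zero d hd, fun a ha b hb => S8.MM_add d hd ha hb⟩,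
    fun a ha hna => S8.MM_reduced d hd ha hna,
    ⟨S8.ff d hd, S8.ff_mem d hd, S8.ff_li d hd⟩,
    S8.MM_atomic d hd, S8.not_ACCP d hd⟩
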